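/- For all formulas A and B, there is a derivation from A to B using only the rules w↓, c↓, ≡ if and only if there is a derivation from A to B using only the rules w↓, w∀, ac↓, c∀, m, m∀, m∃, ≡. -/

import Mathlib

set_option linter.unusedVariables false

/-! ## First-order terms and formulas in negation normal form -/

/-- First-order terms: variables and function symbols are named by natural numbers.
(A function symbol together with the number of arguments it is applied to plays the
role of a symbol of fixed finite arity; there are countably many symbols of each arity.) -/
inductive Term : Type where
  | var : ℕ → Term
  | fn  : ℕ → List Term → Term

/-- The variable `x` occurs in the term. -/
inductive Term.HasVar : Term → ℕ → Prop where
  | var (x : ℕ) : HasVar (.var x) x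
  | fn {f : ℕ} {ts : List Term} {t : Term} {x : ℕ} :
      t ∈ ts → HasVar t x → HasVar (.fn f ts) x

/-- Simultaneous substitution on terms. -/
def Term.subst (σ : ℕ → Term) : Term → Term
  | .var x => σ x
  | .fn f ts => .fn f (ts.attach.map fun t => t.1.subst σ)
decreasing_by
  have := List.sizeOf_lt_of_mem t.2
  simp at *; omega

/-- Renaming of variables in a term. -/
def Term.rename (ρ : ℕ → ℕ) (t : Term) : Term := t.subst (fun x => .var (ρ x))

/-- Formulas in negation normal form: `pos p ts` is the atom `p(ts)` and
`neg p ts` is the atom `p̄(ts)` built from the dual predicate symbol. -/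
inductive Form : Type where
  | pos : ℕ → List Term → Form
  | neg : ℕ → List Term → Form
  | top : Form
  | bot : Form
  | and : Form → Form → Form
  | or  : Form → Form → Form
  | all : ℕ → Form → Form
  | ex  : ℕ → Form → Form

namespace Form

/-- Atoms: `⊤`, `⊥`, `p(ts)`, `p̄(ts)`. -/
def IsAtom : Form → Prop
  | pos _ _ => True
  | neg _ _ => True
  | top => True
  | bot => True
  | _ => False

/-- Negation, defined via De Morgan duality. -/
def negf : Form → Form
  | pos p ts => neg p ts
  | neg p ts => pos p ts
  | top => bot
  | bot => top
  | and A B => or A.negf B.negf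
  | or A B => and A.negf B.negf
  | all x A => ex x A.negf
  | ex x A => all x A.negf

/-- The variable `x` occurs free in the formula. -/
inductive FreeVar : Form → ℕ → Prop where
  | pos {p ts t x} : t ∈ ts → Term.HasVar t x → FreeVar (pos p ts) x
  | neg {p ts t x} : t ∈ ts → Term.HasVar t x → FreeVar (neg p ts) x
  | andl {A B x} : FreeVar A x → FreeVar (and A B) x
  | andr {A B x} : FreeVar B x → FreeVar (and A B) x
  | orl {A B x} : FreeVar A x → FreeVar (or A B) x
  | orr {A B x} : FreeVar B x → FreeVar (or A B) x
  | all {A x y} : FreeVar A x → x ≠ y → FreeVar (all y A) x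
  | ex {A x y} : FreeVar A x → x ≠ y → FreeVar (ex y A) x

/-- Substitution of the term `u` for all free occurrences of the variable `x`. -/
def subst1 (x : ℕ) (u : Term) : Form → Form
  | pos p ts => pos p (ts.map (Term.subst (fun y => if y = x then u else .var y)))
  | neg p ts => neg p (ts.map (Term.subst (fun y => if y = x then u else .var y)))
  | top => top
  | bot => bot
  | and A B => and (A.subst1 x u) (B.subst1 x u)
  | or A B => or (A.subst1 x u) (B.subst1 x u)
  | all y A => if y = x then all y A else all y (A.subst1 x u)
  | ex y A => if y = x then ex y A else ex y (A.subst1 x u)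

/-- Application of a variable renaming to a formula, renaming all occurrences
of variables (both free and bound). -/
def renameAll (ρ : ℕ → ℕ) : Form → Form
  | pos p ts => pos p (ts.map (Term.rename ρ))
  | neg p ts => neg p (ts.map (Term.rename ρ))
  | top => top
  | bot => bot
  | and A B => and (A.renameAll ρ) (B.renameAll ρ)
  | or A B => or (A.renameAll ρ) (B.renameAll ρ)
  | all y A => all (ρ y) (A.renameAll ρ)
  | ex y A => ex (ρ y) (A.renameAll ρ)

/-- The formula contains no occurrence of `⊥`. -/
def BotFree : Form → Prop
  | bot => False
  | and A B => BotFree A ∧ BotFree B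
  | or A B => BotFree A ∧ BotFree B
  | all _ A => BotFree A
  | ex _ A => BotFree A
  | _ => True

/-- Formula equivalence `≡`: the smallest congruence generated by commutativity and
associativity of `∧` and `∨`, commutation of like quantifiers, and the scope equations
`∀x.(A∨B) ≡ (∀x.A)∨B` and `∃x.(A∧B) ≡ (∃x.A)∧B` when `x` is not free in `B`. -/
inductive Equiv : Form → Form → Prop where
  | refl (A) : Equiv A A
  | symm {A B} : Equiv A B → Equiv B A
  | trans {A B C} : Equiv A B → Equiv B C → Equiv A C
  | andCongr {A A' B B'} : Equiv A A' → Equiv B B' → Equiv (and A B) (and A' B')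
  | orCongr {A A' B B'} : Equiv A A' → Equiv B B' → Equiv (or A B) (or A' B')
  | allCongr {A A'} (x) : Equiv A A' → Equiv (all x A) (all x A')
  | exCongr {A A'} (x) : Equiv A A' → Equiv (ex x A) (ex x A')
  | andComm (A B) : Equiv (and A B) (and B A)
  | orComm (A B) : Equiv (or A B) (or B A)
  | andAssoc (A B C) : Equiv (and (and A B) C) (and A (and B C))
  | orAssoc (A B C) : Equiv (or (or A B) C) (or A (or B C))
  | allSwap (x y A) : Equiv (all x (all y A)) (all y (all x A))
  | exSwap (x y A) : Equiv (ex x (ex y A)) (ex y (ex x A))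
  | allOr (x A B) (h : ¬ FreeVar B x) : Equiv (all x (or A B)) (or (all x A) B)
  | exAnd (x A B) (h : ¬ FreeVar B x) : Equiv (ex x (and A B)) (and (ex x A) B)

/-- The list of binding occurrences of variables in a formula. -/
def bvList : Form → List ℕ
  | and A B => A.bvList ++ B.bvList
  | or A B => A.bvList ++ B.bvList
  | all x A => x :: A.bvList
  | ex x A => x :: A.bvList
  | _ => []

/-- A formula is rectified if all bound variables are distinct from one
another and from all free variables. -/
def Rectified (A : Form) : Prop :=
  A.bvList.Nodup ∧ ∀ x ∈ A.bvList, ¬ A.FreeVar x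

/-- The variable `x` occurs (free or bound) in the formula. -/
def VarOccurs (A : Form) (x : ℕ) : Prop := A.FreeVar x ∨ x ∈ A.bvList

/-- The disjunction `⋁Γ` of the formulas of a sequent (written as a list);
by convention the empty disjunction is `⊥`. -/
def bigOr : List Form → Form
  | [] => bot
  | [A] => A
  | A :: B :: Γ => or A (bigOr (B :: Γ))

end Form

/-- α-conversion: renaming of bound variables. -/
inductive Alpha : Form → Form → Prop where
  | refl (A) : Alpha A A
  | symm {A B} : Alpha A B → Alpha B A
  | trans {A B C} : Alpha A B → Alpha B C → Alpha A C
  | andCongr {A A' B B'} : Alpha A A' → Alpha B B' → Alpha (.and A B) (.and A' B')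
  | orCongr {A A' B B'} : Alpha A A' → Alpha B B' → Alpha (.or A B) (.or A' B')
  | allCongr {A A'} (x) : Alpha A A' → Alpha (.all x A) (.all x A')
  | exCongr {A A'} (x) : Alpha A A' → Alpha (.ex x A) (.ex x A')
  | allRen (x y A) (h : ¬ A.VarOccurs y) :
      Alpha (.all x A) (.all y (A.subst1 x (.var y)))
  | exRen (x y A) (h : ¬ A.VarOccurs y) :
      Alpha (.ex x A) (.ex y (A.subst1 x (.var y)))

/-- `B` is a rectification of `A`: a rectified form of `A` obtained by renaming
bound variables. -/
def IsRectification (B A : Form) : Prop := Alpha A B ∧ B.Rectified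

/-! ## Deep inference -/

/-- A (positive) context: a formula with exactly one hole in atom position. -/
inductive Ctx : Type where
  | hole : Ctx
  | andL : Ctx → Form → Ctx
  | andR : Form → Ctx → Ctx
  | orL  : Ctx → Form → Ctx
  | orR  : Form → Ctx → Ctx
  | all  : ℕ → Ctx → Ctx
  | ex   : ℕ → Ctx → Ctx

/-- `S.fill A` replaces the hole of `S` by `A`. -/
def Ctx.fill : Ctx → Form → Form
  | .hole, A => A
  | .andL S B, A => .and (S.fill A) B
  | .andR B S, A => .and B (S.fill A)
  | .orL S B, A => .or (S.fill A) B
  | .orR B S, A => .or B (S.fill A)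
  | .all x S, A => .all x (S.fill A)
  | .ex x S, A => .ex x (S.fill A)

/-- The names of the deep inference rules. -/
inductive RuleName : Type where
  | allTop   -- ∀⊤
  | aiDown   -- ai↓
  | tDown    -- t↓
  | s        -- switch
  | mix      -- mix
  | exR      -- ∃
  | equivR   -- ≡
  | wDown    -- w↓
  | m        -- medial
  | acDown   -- ac↓
  | mAll     -- m∀
  | mEx      -- m∃
  | wAll     -- w∀
  | cAll     -- c∀
  | cDown    -- general contraction c↓
  deriving DecidableEq

/-- Shallow instances of the deep inference rules: `Shallow r P Q` means that the
rule `r` rewrites the premise `P` into the conclusion `Q` (with the empty context). -/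
inductive Shallow : RuleName → Form → Form → Prop where
  | allTop (x : ℕ) : Shallow .allTop .top (.all x .top)
  | aiDown (a : Form) (h : a.IsAtom) : Shallow .aiDown .top (.or a a.negf)
  | tDown (A : Form) : Shallow .tDown A (.and A .top)
  | s (A B C : Form) : Shallow .s (.and A (.or B C)) (.or (.and A B) C)
  | mix (A B : Form) : Shallow .mix (.and A B) (.or A B)
  | exR (x : ℕ) (t : Term) (A : Form) : Shallow .exR (A.subst1 x t) (.ex x A)
  | equivR {A B : Form} (h : Form.Equiv A B) : Shallow .equivR B A
  | wDown (A B : Form) : Shallow .wDown A (.or A B)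
  | m (A B C D : Form) :
      Shallow .m (.or (.and A C) (.and B D)) (.and (.or A B) (.or C D))
  | acDown (a : Form) (h : a.IsAtom) : Shallow .acDown (.or a a) a
  | mAll (x : ℕ) (A B : Form) :
      Shallow .mAll (.or (.all x A) (.all x B)) (.all x (.or A B))
  | mEx (x : ℕ) (A B : Form) :
      Shallow .mEx (.or (.ex x A) (.ex x B)) (.ex x (.or A B))
  | wAll (x : ℕ) (A : Form) (h : ¬ A.FreeVar x) : Shallow .wAll A (.all x A)
  | cAll (x : ℕ) (A : Form) : Shallow .cAll (.all x (.all x A)) (.all x A)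
  | cDown (A : Form) : Shallow .cDown (.or A A) A

/-- One deep inference step using a rule from `R`, applied inside a context. -/
def Step (R : Set RuleName) (A B : Form) : Prop :=
  ∃ r ∈ R, ∃ (S : Ctx) (P Q : Form), Shallow r P Q ∧ A = S.fill P ∧ B = S.fill Q

/-- `Deriv R A B`: there is a derivation from `A` to `B` using only rules from `R`
(a finite sequence of deep inference steps rewriting `A` into `B`). -/
def Deriv (R : Set RuleName) : Form → Form → Prop :=
  Relation.ReflTransGen (Step R)

/-- A formula is provable in a system if there is a derivation from `⊤` to it. -/
def Provable (R : Set RuleName) (A : Form) : Prop := Deriv R .top A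

/-- The linear system `MLS1X`. -/
def MLS1X : Set RuleName :=
  {RuleName.allTop, RuleName.aiDown, RuleName.tDown, RuleName.s, RuleName.mix,
   RuleName.exR, RuleName.equivR}

/-- The system `KS1`. -/
def KS1 : Set RuleName :=
  {RuleName.allTop, RuleName.aiDown, RuleName.tDown, RuleName.s, RuleName.mix,
   RuleName.exR, RuleName.equivR, RuleName.wDown, RuleName.m, RuleName.acDown,
   RuleName.mAll, RuleName.mEx, RuleName.wAll, RuleName.cAll}

/-! ## Auxiliary infrastructure for Statement 11 -/

namespace WC

/-- Composition of contexts. -/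
def Ctx.comp : Ctx → Ctx → Ctx
  | .hole, T => T
  | .andL S B, T => .andL (Ctx.comp S T) B
  | .andR B S, T => .andR B (Ctx.comp S T)
  | .orL S B, T => .orL (Ctx.comp S T) B
  | .orR B S, T => .orR B (Ctx.comp S T)
  | .all x S, T => .all x (Ctx.comp S T)
  | .ex x S, T => .ex x (Ctx.comp S T)

theorem Ctx.fill_comp (S T : Ctx) (A : Form) :
    (Ctx.comp S T).fill A = S.fill (T.fill A) := by
  induction S <;> simp [Ctx.comp, Ctx.fill, *]

theorem Step.fill {R : Set RuleName} (S : Ctx) {A B : Form} (h : Step R A B) :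
    Step R (S.fill A) (S.fill B) := by
  obtain ⟨r, hr, T, P, Q, hs, rfl, rfl⟩ := h
  exact ⟨r, hr, Ctx.comp S T, P, Q, hs, (Ctx.fill_comp S T P).symm,
    (Ctx.fill_comp S T Q).symm⟩

theorem derivFill {R : Set RuleName} (S : Ctx) {A B : Form} (h : Deriv R A B) :
    Deriv R (S.fill A) (S.fill B) :=
  Relation.ReflTransGen.lift S.fill (fun _ _ h => Step.fill S h) _ _ h

/-- A single shallow step. -/
theorem step1 {R : Set RuleName} {r : RuleName} (hr : r ∈ R) {P Q : Form}
    (h : Shallow r P Q) : Deriv R P Q :=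
  Relation.ReflTransGen.single ⟨r, hr, .hole, P, Q, h, rfl, rfl⟩

theorem Deriv.equiv {R : Set RuleName} (hr : RuleName.equivR ∈ R) {A B : Form}
    (h : Form.Equiv A B) : Deriv R A B :=
  step1 hr (Shallow.equivR h.symm)

/-- Simulation lemma: if every shallow rule of `R` is derivable in `R'`,
then every derivation in `R` translates to one in `R'`. -/
theorem deriv_sim {R R' : Set RuleName}
    (H : ∀ r ∈ R, ∀ P Q : Form, Shallow r P Q → Deriv R' P Q)
    {A B : Form} (h : Deriv R A B) : Deriv R' A B := by
  induction h with
  | refl => exact .refl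
  | tail _ hstep ih =>
    obtain ⟨r, hr, S, P, Q, hs, rfl, rfl⟩ := hstep
    exact ih.trans (derivFill S (H r hr P Q hs))

/-- `(A∨B)∨(A∨B) ≡ (A∨A)∨(B∨B)`. -/
theorem equiv_or_medial (A B : Form) :
    Form.Equiv (.or (.or A B) (.or A B)) (.or (.or A A) (.or B B)) := by
  have h1 : Form.Equiv (Form.or B (.or A B)) (Form.or A (.or B B)) :=
    .trans (.symm (.orAssoc B A B))
      (.trans (.orCongr (.orComm B A) (.refl B)) (.orAssoc A B B))
  exact .trans (.orAssoc A B (.or A B))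
    (.trans (.orCongr (.refl A) h1) (.symm (.orAssoc A A (.or B B))))

def Lset : Set RuleName := {RuleName.wDown, RuleName.cDown, RuleName.equivR}

def Kset : Set RuleName :=
  {RuleName.wDown, RuleName.wAll, RuleName.acDown, RuleName.cAll,
   RuleName.m, RuleName.mAll, RuleName.mEx, RuleName.equivR}

theorem hLw : RuleName.wDown ∈ Lset := by simp [Lset]
theorem hLc : RuleName.cDown ∈ Lset := by simp [Lset]
theorem hLe : RuleName.equivR ∈ Lset := by simp [Lset]

theorem hKw : RuleName.wDown ∈ Kset := by simp [Kset]
theorem hKac : RuleName.acDown ∈ Kset := by simp [Kset]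
theorem hKm : RuleName.m ∈ Kset := by simp [Kset]
theorem hKmA : RuleName.mAll ∈ Kset := by simp [Kset]
theorem hKmE : RuleName.mEx ∈ Kset := by simp [Kset]
theorem hKe : RuleName.equivR ∈ Kset := by simp [Kset]

/-- General contraction is derivable in `Kset`. -/
theorem contrK (A : Form) : Deriv Kset (.or A A) A := by
  induction A with
  | pos p ts => exact step1 hKac (.acDown _ trivial)
  | neg p ts => exact step1 hKac (.acDown _ trivial)
  | top => exact step1 hKac (.acDown _ trivial)
  | bot => exact step1 hKac (.acDown _ trivial)
  | and A B ihA ihB =>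
    refine (step1 hKm (.m A A B B)).trans ?_
    exact (derivFill (.andL .hole (.or B B)) ihA).trans (derivFill (.andR A .hole) ihB)
  | or A B ihA ihB =>
    refine (Deriv.equiv hKe (equiv_or_medial A B)).trans ?_
    exact (derivFill (.orL .hole (.or B B)) ihA).trans (derivFill (.orR A .hole) ihB)
  | all x A ih =>
    exact (step1 hKmA (.mAll x A A)).trans (derivFill (.all x .hole) ih)
  | ex x A ih =>
    exact (step1 hKmE (.mEx x A A)).trans (derivFill (.ex x .hole) ih)

theorem not_freevar_all (x : ℕ) (A : Form) : ¬ Form.FreeVar (.all x A) x := by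
  intro h; cases h with | all _ hne => exact hne rfl

/-- `c∀` is derivable in `Lset`. -/
theorem callL (x : ℕ) (A : Form) :
    Deriv Lset (.all x (.all x A)) (.all x A) := by
  have s1 : Deriv Lset (.all x (.all x A)) (.all x (.or (.all x A) A)) :=
    derivFill (.all x .hole) (step1 hLw (.wDown (.all x A) A))
  have s2 : Form.Equiv (.all x (.or (.all x A) A)) (.or (.all x A) (.all x A)) :=
    .trans (.allCongr x (.orComm (.all x A) A)) (.allOr x A (.all x A) (not_freevar_all x A))
  exact (s1.trans (Deriv.equiv hLe s2)).trans (step1 hLc (.cDown (.all x A)))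

/-- `w∀` is derivable in `Lset`. -/
theorem wallL (x : ℕ) (A : Form) (h : ¬ A.FreeVar x) :
    Deriv Lset A (.all x A) := by
  have s1 : Deriv Lset A (.or A (.all x A)) := step1 hLw (.wDown A (.all x A))
  have s2 : Form.Equiv (.or A (.all x A)) (.all x (.or A A)) :=
    .trans (.orComm A (.all x A)) (.symm (.allOr x A A h))
  have s3 : Deriv Lset (.all x (.or A A)) (.all x A) :=
    derivFill (.all x .hole) (step1 hLc (.cDown A))
  exact (s1.trans (Deriv.equiv hLe s2)).trans s3

/-- medial is derivable in `Lset`. -/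
theorem mL (A B C D : Form) :
    Deriv Lset (.or (.and A C) (.and B D)) (.and (.or A B) (.or C D)) := by
  set T : Form := .and (.or A B) (.or C D) with hT
  have d1 : Deriv Lset (.and A C) T :=
    (derivFill (.andL .hole C) (step1 hLw (.wDown A B))).trans
      (derivFill (.andR (.or A B) .hole) (step1 hLw (.wDown C D)))
  have d2 : Deriv Lset (.and B D) T := by
    have e : Deriv Lset (.and B D) (.and (.or B A) (.or D C)) :=
      (derivFill (.andL .hole D) (step1 hLw (.wDown B A))).trans
        (derivFill (.andR (.or B A) .hole) (step1 hLw (.wDown D C)))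
    exact e.trans (Deriv.equiv hLe (.andCongr (.orComm B A) (.orComm D C)))
  exact ((derivFill (.orL .hole (.and B D)) d1).trans (derivFill (.orR T .hole) d2)).trans
    (step1 hLc (.cDown T))

/-- `m∀` is derivable in `Lset`. -/
theorem mAllL (x : ℕ) (A B : Form) :
    Deriv Lset (.or (.all x A) (.all x B)) (.all x (.or A B)) := by
  have d1 : Deriv Lset (.all x A) (.all x (.or A B)) :=
    derivFill (.all x .hole) (step1 hLw (.wDown A B))
  have d2 : Deriv Lset (.all x B) (.all x (.or A B)) :=
    (derivFill (.all x .hole) (step1 hLw (.wDown B A))).trans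
      (Deriv.equiv hLe (.allCongr x (.orComm B A)))
  exact ((derivFill (.orL .hole (.all x B)) d1).trans
    (derivFill (.orR (.all x (.or A B)) .hole) d2)).trans
    (step1 hLc (.cDown (.all x (.or A B))))

/-- `m∃` is derivable in `Lset`. -/
theorem mExL (x : ℕ) (A B : Form) :
    Deriv Lset (.or (.ex x A) (.ex x B)) (.ex x (.or A B)) := by
  have d1 : Deriv Lset (.ex x A) (.ex x (.or A B)) :=
    derivFill (.ex x .hole) (step1 hLw (.wDown A B))
  have d2 : Deriv Lset (.ex x B) (.ex x (.or A B)) :=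
    (derivFill (.ex x .hole) (step1 hLw (.wDown B A))).trans
      (Deriv.equiv hLe (.exCongr x (.orComm B A)))
  exact ((derivFill (.orL .hole (.ex x B)) d1).trans
    (derivFill (.orR (.ex x (.or A B)) .hole) d2)).trans
    (step1 hLc (.cDown (.ex x (.or A B))))

end WC

/-- Derivability in `{w↓, c↓, ≡}` coincides with derivability
in `{w↓, w∀, ac↓, c∀, m, m∀, m∃, ≡}`. -/
theorem wc_iff_atomic (A B : Form) :
    Deriv {RuleName.wDown, RuleName.cDown, RuleName.equivR} A B ↔
    Deriv {RuleName.wDown, RuleName.wAll, RuleName.acDown, RuleName.cAll,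
           RuleName.m, RuleName.mAll, RuleName.mEx, RuleName.equivR} A B := by
  show Deriv WC.Lset A B ↔ Deriv WC.Kset A B
  constructor
  · intro h
    refine WC.deriv_sim ?_ h
    intro r hr P Q hs
    simp only [WC.Lset, Set.mem_insert_iff, Set.mem_singleton_iff] at hr
    rcases hr with rfl | rfl | rfl
    · exact WC.step1 WC.hKw hs
    · exact match hs with | .cDown C => WC.contrK C
    · exact WC.step1 WC.hKe hs
  · intro h
    refine WC.deriv_sim ?_ h
    intro r hr P Q hs
    simp only [WC.Kset, Set.mem_insert_iff, Set.mem_singleton_iff] at hr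
    rcases hr with rfl | rfl | rfl | rfl | rfl | rfl | rfl | rfl
    · exact WC.step1 WC.hLw hs
    · exact match hs with | .wAll y C hy => WC.wallL y C hy
    · exact match hs with | .acDown c hc => WC.step1 WC.hLc (.cDown c)
    · exact match hs with | .cAll y C => WC.callL y C
    · exact match hs with | .m W X Y Z => WC.mL W X Y Z
    · exact match hs with | .mAll y C D => WC.mAllL y C D
    · exact match hs with | .mEx y C D => WC.mExL y C D
    · exact WC.step1 WC.hLe hs
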